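/- Let d ≥ 2 and let μ be any Borel probability measure on the unit sphere S^{d−1} ⊂ ℝ^d. Then the second-moment simplex energy satisfies ∫∫_{S^{d−1}×S^{d−1}} (⟨x, y⟩ + 1/d)² dμ(x) dμ(y) ≥ (d+1)/d². -/

import Mathlib

open RealInnerProductSpace MeasureTheory

/-- For any Borel probability measure `μ` on the unit sphere `S^{d-1} ⊂ ℝ^d`, `d ≥ 2`,
the energy `∫∫ (⟪x, y⟫ + 1/d)² dμ(x) dμ(y)` is at least `(d+1)/d²`. -/
theorem simplex_energy_two (d : ℕ) (hd : 2 ≤ d)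
    (μ : Measure (Metric.sphere (0 : EuclideanSpace ℝ (Fin d)) 1))
    [IsProbabilityMeasure μ] :
    ((d : ℝ) + 1) / (d : ℝ) ^ 2 ≤
      ∫ x, ∫ y,
        (⟪(x : EuclideanSpace ℝ (Fin d)), (y : EuclideanSpace ℝ (Fin d))⟫ + 1 / (d : ℝ)) ^ 2
        ∂μ ∂μ := by
  have hd0 : (0:ℝ) < (d:ℝ) := by
    have : 0 < d := lt_of_lt_of_le (by norm_num) hd
    exact_mod_cast this
  set c : Metric.sphere (0 : EuclideanSpace ℝ (Fin d)) 1 → Fin d → ℝ :=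
    fun x i => (x : EuclideanSpace ℝ (Fin d)) i with hc
  have hcont : ∀ i, Continuous fun x => c x i := fun i =>
    (continuous_apply i).comp ((PiLp.continuous_ofLp 2 _).comp continuous_subtype_val)
  have hint : ∀ f : Metric.sphere (0 : EuclideanSpace ℝ (Fin d)) 1 → ℝ,
      Continuous f → Integrable f μ := fun f hf =>
    hf.integrable_of_hasCompactSupport (HasCompactSupport.of_compactSpace f)
  set b : Fin d → ℝ := fun i => ∫ y, c y i ∂μ with hb
  set a : Fin d → Fin d → ℝ := fun i j => ∫ y, c y i * c y j ∂μ with ha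
  have hnorm : ∀ y : Metric.sphere (0 : EuclideanSpace ℝ (Fin d)) 1,
      ∑ i, c y i ^ 2 = 1 := by
    intro y
    have h1 : ‖(y : EuclideanSpace ℝ (Fin d))‖ = 1 := by
      simpa using mem_sphere_zero_iff_norm.mp y.2
    have h2 := EuclideanSpace.norm_eq (y : EuclideanSpace ℝ (Fin d))
    rw [h1] at h2
    have h3 : ∑ i, ‖(y : EuclideanSpace ℝ (Fin d)) i‖ ^ 2 = 1 :=
      Real.sqrt_eq_one.mp h2.symm
    simpa [hc, sq_abs] using h3
  have inner_eq : ∀ x y : Metric.sphere (0 : EuclideanSpace ℝ (Fin d)) 1,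
      (⟪(x : EuclideanSpace ℝ (Fin d)), (y : EuclideanSpace ℝ (Fin d))⟫ : ℝ)
        = ∑ i, c x i * c y i := by
    intro x y
    simp [hc, PiLp.inner_apply, RCLike.inner_apply, mul_comm]
  have expand : ∀ x y : Metric.sphere (0 : EuclideanSpace ℝ (Fin d)) 1,
      (⟪(x : EuclideanSpace ℝ (Fin d)), (y : EuclideanSpace ℝ (Fin d))⟫ + 1 / (d:ℝ)) ^ 2
        = (∑ i, ∑ j, (c x i * c x j) * (c y i * c y j))
          + (2 / (d:ℝ)) * (∑ i, c x i * c y i) + 1 / (d:ℝ) ^ 2 := by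
    intro x y
    rw [inner_eq]
    have hs : (∑ i, c x i * c y i) ^ 2
        = ∑ i, ∑ j, (c x i * c x j) * (c y i * c y j) := by
      rw [sq, Finset.sum_mul_sum]
      exact Finset.sum_congr rfl fun i _ => Finset.sum_congr rfl fun j _ => by ring
    rw [add_sq, hs]
    ring
  have hintmul : ∀ i j, Integrable (fun y => c y i * c y j) μ := fun i j =>
    hint _ ((hcont i).mul (hcont j))
  have inner_int : ∀ x : Metric.sphere (0 : EuclideanSpace ℝ (Fin d)) 1,
      (∫ y, (⟪(x : EuclideanSpace ℝ (Fin d)), (y : EuclideanSpace ℝ (Fin d))⟫ + 1 / (d:ℝ)) ^ 2 ∂μ)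
        = (∑ i, ∑ j, (c x i * c x j) * a i j)
          + (2 / (d:ℝ)) * (∑ i, c x i * b i) + 1 / (d:ℝ) ^ 2 := by
    intro x
    simp_rw [expand x]
    have hI1 : Integrable (fun y => ∑ i, ∑ j, (c x i * c x j) * (c y i * c y j)) μ :=
      integrable_finset_sum _ fun i _ => integrable_finset_sum _ fun j _ =>
        (hintmul i j).const_mul _
    have hI2 : Integrable (fun y => (2 / (d:ℝ)) * (∑ i, c x i * c y i)) μ :=
      (integrable_finset_sum _ fun i _ => (hint _ (hcont i)).const_mul _).const_mul _
    have hI12 : Integrable (fun y => (∑ i, ∑ j, (c x i * c x j) * (c y i * c y j))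
        + (2 / (d:ℝ)) * (∑ i, c x i * c y i)) μ := hI1.add hI2
    rw [integral_add hI12 (integrable_const _), integral_add hI1 hI2, integral_const]
    simp only [measure_univ, probReal_univ, ENNReal.toReal_one, one_smul]
    congr 1
    · congr 1
      · rw [integral_finset_sum _ fun i _ => integrable_finset_sum _ fun j _ =>
          (hintmul i j).const_mul _]
        refine Finset.sum_congr rfl fun i _ => ?_
        rw [integral_finset_sum _ fun j _ => (hintmul i j).const_mul _]
        exact Finset.sum_congr rfl fun j _ => integral_const_mul _ _
      · rw [integral_const_mul, integral_finset_sum _ fun i _ => (hint _ (hcont i)).const_mul _]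
        congr 1
        exact Finset.sum_congr rfl fun i _ => integral_const_mul _ _
  simp_rw [inner_int]
  have hJ1 : Integrable (fun x => ∑ i, ∑ j, (c x i * c x j) * a i j) μ :=
    integrable_finset_sum _ fun i _ => integrable_finset_sum _ fun j _ =>
      (hintmul i j).mul_const _
  have hJ2 : Integrable (fun x => (2 / (d:ℝ)) * (∑ i, c x i * b i)) μ :=
    (integrable_finset_sum _ fun i _ => (hint _ (hcont i)).mul_const _).const_mul _
  have hJ12 : Integrable (fun x => (∑ i, ∑ j, (c x i * c x j) * a i j)
      + (2 / (d:ℝ)) * (∑ i, c x i * b i)) μ := hJ1.add hJ2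
  rw [integral_add hJ12 (integrable_const _), integral_add hJ1 hJ2, integral_const]
  simp only [measure_univ, probReal_univ, ENNReal.toReal_one, one_smul]
  have e1 : (∫ x, ∑ i, ∑ j, (c x i * c x j) * a i j ∂μ) = ∑ i, ∑ j, a i j ^ 2 := by
    rw [integral_finset_sum _ fun i _ => integrable_finset_sum _ fun j _ =>
      (hintmul i j).mul_const _]
    refine Finset.sum_congr rfl fun i _ => ?_
    rw [integral_finset_sum _ fun j _ => (hintmul i j).mul_const _]
    refine Finset.sum_congr rfl fun j _ => ?_
    rw [integral_mul_const]; rw [sq]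
  have e2 : (∫ x, (2 / (d:ℝ)) * (∑ i, c x i * b i) ∂μ) = (2 / (d:ℝ)) * ∑ i, b i ^ 2 := by
    rw [integral_const_mul, integral_finset_sum _ fun i _ => (hint _ (hcont i)).mul_const _]
    congr 1
    refine Finset.sum_congr rfl fun i _ => ?_
    rw [integral_mul_const]; rw [sq]
  rw [e1, e2]
  have htr : ∑ i, a i i = 1 := by
    have h4 : ∑ i, a i i = ∫ y, ∑ i, c y i * c y i ∂μ :=
      (integral_finset_sum _ fun i _ => hintmul i i).symm
    rw [h4]
    have h5 : (fun y : Metric.sphere (0 : EuclideanSpace ℝ (Fin d)) 1 =>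
        ∑ i, c y i * c y i) = fun _ => (1:ℝ) := by
      funext y
      simpa [sq] using hnorm y
    rw [h5, integral_const]
    simp
  have hdiag : 1 / (d:ℝ) ≤ ∑ i, a i i ^ 2 := by
    have hcs := sq_sum_le_card_mul_sum_sq (s := (Finset.univ : Finset (Fin d)))
      (f := fun i => a i i)
    rw [htr] at hcs
    simp only [Finset.card_univ, Fintype.card_fin, one_pow] at hcs
    rw [div_le_iff₀ hd0]
    linarith [hcs]
  have hfull : ∑ i, a i i ^ 2 ≤ ∑ i, ∑ j, a i j ^ 2 :=
    Finset.sum_le_sum fun i _ =>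
      Finset.single_le_sum (fun j _ => sq_nonneg (a i j)) (Finset.mem_univ i)
  have hb2 : (0:ℝ) ≤ (2 / (d:ℝ)) * ∑ i, b i ^ 2 :=
    mul_nonneg (by positivity) (Finset.sum_nonneg fun i _ => sq_nonneg _)
  have hgoal : ((d:ℝ) + 1) / (d:ℝ) ^ 2 = 1 / (d:ℝ) + 1 / (d:ℝ) ^ 2 := by
    field_simp
  rw [hgoal]
  linarith [hdiag, hfull, hb2]
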